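/- Let n ≤ m. For every integer k with m ≤ k ≤ mn, there exists a density operator ρ on C^n ⊗ C^m with rank ρ = k, tr_B ρ = (1/n) I_n, and tr_A ρ = (1/m) I_m. -/

import Mathlib

open ComplexOrder
open scoped Matrix
open Fin.NatCast Fin.CommRing

/-- `ω = e^{2πi/n}`, a primitive `n`-th root of unity. -/
noncomputable def omegaC (n : ℕ) : ℂ := Complex.exp (2 * Real.pi * Complex.I / n)

/-- The cyclic shift operator `X` on `ℂ^m`: `X |j⟩ = |j + 1 mod m⟩`. -/
def shiftX (m : ℕ) [NeZero m] : Matrix (Fin m) (Fin m) ℂ :=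
  fun i j => if i = j + 1 then 1 else 0

/-- The generalized clock operator `Z_n` on `ℂ^m`: `Z_n |i⟩ = ω^i |i⟩` with `ω = e^{2πi/n}`. -/
noncomputable def weylZ (n m : ℕ) : Matrix (Fin m) (Fin m) ℂ :=
  Matrix.diagonal fun i : Fin m => omegaC n ^ (i : ℕ)

/-- The maximally entangled state `|ψ₀₀⟩ = (1/√n) ∑_{s<n} |s⟩ ⊗ |s⟩` in `ℂ^n ⊗ ℂ^m`. -/
noncomputable def psi00 (n m : ℕ) : Fin n × Fin m → ℂ :=
  fun p => if (p.1 : ℕ) = (p.2 : ℕ) then ((Real.sqrt n : ℝ)⁻¹ : ℂ) else 0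

/-- Apply an operator `M` on `ℂ^m` to the second tensor factor of `ℂ^n ⊗ ℂ^m`. -/
noncomputable def applyB {n m : ℕ} (M : Matrix (Fin m) (Fin m) ℂ)
    (v : Fin n × Fin m → ℂ) : Fin n × Fin m → ℂ :=
  fun p => ∑ c : Fin m, M p.2 c * v (p.1, c)

/-- `|ψ_{ij}⟩ = (I_n ⊗ X^i Z_n^j) |ψ₀₀⟩`. -/
noncomputable def psiV (n m : ℕ) [NeZero m] (i : Fin m) (j : Fin n) :
    Fin n × Fin m → ℂ :=
  applyB (shiftX m ^ (i : ℕ) * weylZ n m ^ (j : ℕ)) (psi00 n m)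

/-- The rank-one projector `|v⟩⟨v|`. -/
noncomputable def proj {α : Type*} (v : α → ℂ) : Matrix α α ℂ :=
  fun p q => v p * star (v q)

/-- Partial trace over the second tensor factor. -/
noncomputable def trB {n m : ℕ} (ρ : Matrix (Fin n × Fin m) (Fin n × Fin m) ℂ) :
    Matrix (Fin n) (Fin n) ℂ :=
  fun a a' => ∑ b : Fin m, ρ (a, b) (a', b)

/-- Partial trace over the first tensor factor. -/
noncomputable def trA {n m : ℕ} (ρ : Matrix (Fin n × Fin m) (Fin n × Fin m) ℂ) :
    Matrix (Fin m) (Fin m) ℂ :=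
  fun b b' => ∑ a : Fin n, ρ (a, b) (a, b')

lemma shiftX_pow (m : ℕ) [NeZero m] (i : ℕ) : ∀ (b c : Fin m),
    (shiftX m ^ i) b c = if b = c + (i : Fin m) then 1 else 0 := by
  induction i with
  | zero => intro b c; simp [Matrix.one_apply]
  | succ i ih =>
    intro b c
    rw [pow_succ, Matrix.mul_apply]
    simp only [shiftX, mul_ite, mul_one, mul_zero]
    rw [Finset.sum_ite_eq' Finset.univ (c+1)]
    simp only [Finset.mem_univ, if_true, ih b (c+1)]
    have h : c + 1 + (i : Fin m) = c + ((i+1 : ℕ) : Fin m) := by push_cast; ring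
    rw [h]

lemma psiV_apply (n m : ℕ) [NeZero n] [NeZero m] (i : Fin m) (j : Fin n) (a : Fin n) (b : Fin m) :
    psiV n m i j (a, b) = if (a : ℕ) = ((b - i : Fin m) : ℕ) then
      omegaC n ^ ((j : ℕ) * ((b - i : Fin m) : ℕ)) * ((Real.sqrt n : ℝ)⁻¹ : ℂ) else 0 := by
  unfold psiV applyB
  have hM : ∀ c : Fin m, (shiftX m ^ (i:ℕ) * weylZ n m ^ (j:ℕ)) b c
      = if b = c + i then omegaC n ^ ((c:ℕ) * (j:ℕ)) else 0 := by
    intro c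
    rw [weylZ, Matrix.diagonal_pow, Matrix.mul_diagonal, Pi.pow_apply, ← pow_mul, shiftX_pow,
      Fin.cast_val_eq_self, ite_mul, one_mul, zero_mul]
  simp only [hM]
  have key : ∀ c : Fin m, (if b = c + i then omegaC n ^ ((c:ℕ)*(j:ℕ)) else 0) * psi00 n m (a, c)
      = if c = b - i then (if (a:ℕ) = ((b-i : Fin m):ℕ) then
          omegaC n ^ ((j:ℕ) * ((b-i : Fin m):ℕ)) * ((Real.sqrt n : ℝ)⁻¹ : ℂ) else 0) else 0 := by
    intro c
    rcases eq_or_ne c (b - i) with hc | hc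
    · subst hc
      have hb : b = b - i + i := by ring
      rw [if_pos hb, if_pos rfl]
      simp only [psi00]
      by_cases ha : (a:ℕ) = ((b-i:Fin m):ℕ)
      · rw [if_pos ha, if_pos ha, mul_comm ((b-i:Fin m):ℕ) (j:ℕ)]
      · rw [if_neg ha, if_neg ha, mul_zero]
    · have hb : ¬ b = c + i := fun h => hc (by rw [h]; ring)
      rw [if_neg hb, if_neg hc, zero_mul]
  rw [Finset.sum_congr rfl (fun c _ => key c), Finset.sum_ite_eq' Finset.univ (b - i)]
  simp

lemma omegaC_star_mul (n : ℕ) : star (omegaC n) * omegaC n = 1 := by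
  have h : star (omegaC n) = Complex.exp (-(2*Real.pi*Complex.I/n)) := by
    rw [omegaC, Complex.star_def, ← Complex.exp_conj]
    congr 1
    simp [map_div₀, Complex.conj_I, map_ofNat]
    ring
  rw [h, omegaC, ← Complex.exp_add, neg_add_cancel, Complex.exp_zero]

lemma omegaC_pow_n (n : ℕ) [NeZero n] : omegaC n ^ n = 1 :=
  (Complex.isPrimitiveRoot_exp n (NeZero.ne n)).pow_eq_one

lemma omega_pow_mul_star (n t : ℕ) : omegaC n ^ t * star (omegaC n ^ t) = 1 := by
  rw [star_pow, mul_comm, ← mul_pow, omegaC_star_mul, one_pow]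

lemma sum_fin_ite_lt {M : Type*} [AddCommMonoid M] (m n : ℕ) (hnm : n ≤ m) (h : ℕ → M) :
    (∑ d : Fin m, if (d:ℕ) < n then h d else 0) = ∑ t ∈ Finset.range n, h t := by
  rw [Fin.sum_univ_eq_sum_range (fun t => if t < n then h t else 0) m,
    ← Finset.sum_subset (Finset.range_subset_range.mpr hnm)
      (fun t _ ht => if_neg (fun h' => ht (Finset.mem_range.mpr h')))]
  exact Finset.sum_congr rfl fun t ht => if_pos (Finset.mem_range.mp ht)

lemma sum_fin_ite_eq {M : Type*} [AddCommMonoid M] (n t : ℕ) (ht : t < n) (f : Fin n → M) :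
    (∑ a : Fin n, if (a:ℕ) = t then f a else 0) = f ⟨t, ht⟩ := by
  rw [Finset.sum_eq_single ⟨t, ht⟩]
  · simp
  · intro a _ ha; exact if_neg (fun h => ha (Fin.ext h))
  · simp

lemma sum_fin_ite_eq' {M : Type*} [AddCommMonoid M] (n t : ℕ) (ht : t < n) (f : Fin n → M) :
    (∑ a : Fin n, if t = (a:ℕ) then f a else 0) = f ⟨t, ht⟩ := by
  rw [← sum_fin_ite_eq n t ht f]
  exact Finset.sum_congr rfl fun a _ => by simp [eq_comm]

lemma sum_fin_ite_eq_zero {M : Type*} [AddCommMonoid M] (n t : ℕ) (ht : ¬ t < n) (f : Fin n → M) :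
    (∑ a : Fin n, if (a:ℕ) = t then f a else 0) = 0 := by
  apply Finset.sum_eq_zero; intro a _
  exact if_neg (fun (h : (a:ℕ) = t) => ht (h ▸ a.isLt))

lemma sum_fin_ite_const {M : Type*} [AddCommMonoid M] (n t : ℕ) (X : M) :
    (∑ a : Fin n, if (a:ℕ) = t then X else 0) = if t < n then X else 0 := by
  by_cases ht : t < n
  · rw [if_pos ht]; exact sum_fin_ite_eq n t ht (fun _ => X)
  · rw [if_neg ht]; exact sum_fin_ite_eq_zero n t ht _

lemma geom_zeta (n : ℕ) (ζ : ℂ) (hζn : ζ ^ n = 1) (hζ : ζ ≠ 1) :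
    ∑ t ∈ Finset.range n, ζ ^ t = 0 := by
  rw [geom_sum_eq hζ, hζn, sub_self, zero_div]

lemma s_sq (n : ℕ) : (((Real.sqrt n : ℝ)⁻¹ : ℂ)) * ((Real.sqrt n : ℝ)⁻¹ : ℂ) = (n:ℂ)⁻¹ := by
  rw [← Complex.ofReal_inv, ← Complex.ofReal_mul, ← mul_inv,
    Real.mul_self_sqrt (Nat.cast_nonneg n)]
  push_cast
  ring

-- abbreviation for the normalization scalar
noncomputable def sC (n : ℕ) : ℂ := ((Real.sqrt n : ℝ)⁻¹ : ℂ)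

lemma psiV_orth (n m : ℕ) [NeZero n] [NeZero m] (hnm : n ≤ m)
    (i i' : Fin m) (j j' : Fin n) :
    (∑ p : Fin n × Fin m, star (psiV n m i j p) * psiV n m i' j' p)
      = if i = i' ∧ j = j' then 1 else 0 := by
  rcases eq_or_ne i i' with rfl | hii
  · rw [Fintype.sum_prod_type, Finset.sum_comm]
    have inner : ∀ b : Fin m,
        (∑ a : Fin n, star (psiV n m i j (a, b)) * psiV n m i j' (a, b))
        = if ((b - i : Fin m):ℕ) < n then
            (star (omegaC n ^ ((j:ℕ) * ((b-i:Fin m):ℕ))) * omegaC n ^ ((j':ℕ) * ((b-i:Fin m):ℕ)))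
              * (n:ℂ)⁻¹ else 0 := by
      intro b
      have : ∀ a : Fin n, star (psiV n m i j (a, b)) * psiV n m i j' (a, b)
          = if (a:ℕ) = ((b-i:Fin m):ℕ) then
              (star (omegaC n ^ ((j:ℕ) * ((b-i:Fin m):ℕ))) * omegaC n ^ ((j':ℕ) * ((b-i:Fin m):ℕ)))
                * (n:ℂ)⁻¹ else 0 := by
        intro a
        rw [psiV_apply, psiV_apply]
        by_cases ha : (a:ℕ) = ((b-i:Fin m):ℕ)
        · rw [if_pos ha, if_pos ha, if_pos ha]
          rw [star_mul]
          have hs : star (((Real.sqrt n : ℝ)⁻¹ : ℂ)) = ((Real.sqrt n : ℝ)⁻¹ : ℂ) := by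
            rw [Complex.star_def, ← Complex.ofReal_inv, Complex.conj_ofReal]
          rw [hs]
          have h2 := s_sq n
          linear_combination (star (omegaC n ^ ((j:ℕ) * ((b-i:Fin m):ℕ)))
            * omegaC n ^ ((j':ℕ) * ((b-i:Fin m):ℕ))) * h2
        · rw [if_neg ha, if_neg ha, if_neg ha, star_zero, zero_mul]
      rw [Finset.sum_congr rfl (fun a _ => this a), sum_fin_ite_const]
    rw [Finset.sum_congr rfl (fun b _ => inner b)]
    have hre := Fintype.sum_equiv (Equiv.subRight i)
      (fun b : Fin m => if ((b - i : Fin m):ℕ) < n then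
        star (omegaC n ^ ((j:ℕ) * ((b-i:Fin m):ℕ))) * omegaC n ^ ((j':ℕ) * ((b-i:Fin m):ℕ))
          * (n:ℂ)⁻¹ else 0)
      (fun d : Fin m => if ((d : Fin m):ℕ) < n then
        star (omegaC n ^ ((j:ℕ) * ((d:Fin m):ℕ))) * omegaC n ^ ((j':ℕ) * ((d:Fin m):ℕ))
          * (n:ℂ)⁻¹ else 0) (fun b => rfl)
    rw [hre, sum_fin_ite_lt m n hnm (fun t => star (omegaC n ^ ((j:ℕ) * t)) * omegaC n ^ ((j':ℕ) * t) * ((n:ℕ):ℂ)⁻¹)]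
    have hterm : ∀ t : ℕ, (star (omegaC n ^ ((j:ℕ) * t)) * omegaC n ^ ((j':ℕ) * t)) * (n:ℂ)⁻¹
        = ((star (omegaC n ^ (j:ℕ)) * omegaC n ^ (j':ℕ)) ^ t) * (n:ℂ)⁻¹ := by
      intro t
      rw [mul_pow, ← star_pow, ← pow_mul, ← pow_mul]
    rw [Finset.sum_congr rfl (fun t _ => hterm t), ← Finset.sum_mul]
    rcases eq_or_ne j j' with rfl | hjj
    · have hζ : star (omegaC n ^ (j:ℕ)) * omegaC n ^ (j:ℕ) = 1 := by
        rw [star_pow, ← mul_pow, omegaC_star_mul, one_pow]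
      simp only [hζ, one_pow, Finset.sum_const, Finset.card_range, nsmul_eq_mul, mul_one]
      rw [mul_inv_cancel₀ (Nat.cast_ne_zero.mpr (NeZero.ne n))]
      simp
    · have hζn : (star (omegaC n ^ (j:ℕ)) * omegaC n ^ (j':ℕ)) ^ n = 1 := by
        rw [mul_pow, ← star_pow, pow_right_comm, pow_right_comm (omegaC n) (j':ℕ) n,
          omegaC_pow_n, one_pow, one_pow, star_one, one_mul]
      have hζ1 : star (omegaC n ^ (j:ℕ)) * omegaC n ^ (j':ℕ) ≠ 1 := by
        intro h
        have h2 : omegaC n ^ (j':ℕ) = omegaC n ^ (j:ℕ) := by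
          have hu : omegaC n ^ (j:ℕ) * (star (omegaC n ^ (j:ℕ)) * omegaC n ^ (j':ℕ))
              = omegaC n ^ (j:ℕ) := by rw [h, mul_one]
          have hv : omegaC n ^ (j:ℕ) * star (omegaC n ^ (j:ℕ)) = 1 := omega_pow_mul_star n _
          calc omegaC n ^ (j':ℕ) = (omegaC n ^ (j:ℕ) * star (omegaC n ^ (j:ℕ)))
                * omegaC n ^ (j':ℕ) := by rw [hv, one_mul]
            _ = omegaC n ^ (j:ℕ) * (star (omegaC n ^ (j:ℕ)) * omegaC n ^ (j':ℕ)) := by ring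
            _ = omegaC n ^ (j:ℕ) := hu
        have := (Complex.isPrimitiveRoot_exp n (NeZero.ne n)).pow_inj j'.isLt j.isLt h2
        exact hjj (Fin.ext this).symm
      rw [geom_zeta n _ hζn hζ1, zero_mul, if_neg (by tauto)]
  · rw [if_neg (by tauto)]
    apply Finset.sum_eq_zero
    rintro ⟨a, b⟩ _
    rw [psiV_apply, psiV_apply]
    by_cases h1 : (a:ℕ) = ((b - i : Fin m):ℕ)
    · by_cases h2 : (a:ℕ) = ((b - i' : Fin m):ℕ)
      · exfalso; apply hii
        have h3 : (b - i : Fin m) = b - i' := Fin.ext (h1.symm.trans h2)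
        calc i = b - (b - i) := by ring
          _ = b - (b - i') := by rw [h3]
          _ = i' := by ring
      · rw [if_neg h2, mul_zero]
    · rw [if_neg h1, star_zero, zero_mul]

lemma phase_cancel (n : ℕ) (t : ℕ) :
    (omegaC n ^ t * ((Real.sqrt n : ℝ)⁻¹ : ℂ)) * star (omegaC n ^ t * ((Real.sqrt n : ℝ)⁻¹ : ℂ))
      = (n:ℂ)⁻¹ := by
  rw [star_mul]
  have hs : star (((Real.sqrt n : ℝ)⁻¹ : ℂ)) = ((Real.sqrt n : ℝ)⁻¹ : ℂ) := by
    rw [Complex.star_def, ← Complex.ofReal_inv, Complex.conj_ofReal]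
  rw [hs]
  have hv := omega_pow_mul_star n t
  have h2 := s_sq n
  linear_combination (((Real.sqrt n : ℝ)⁻¹ : ℂ) * ((Real.sqrt n : ℝ)⁻¹ : ℂ)) * hv + h2

lemma psiV_trB (n m : ℕ) [NeZero n] [NeZero m] (hnm : n ≤ m) (i : Fin m) (j : Fin n)
    (a a' : Fin n) :
    (∑ b : Fin m, psiV n m i j (a, b) * star (psiV n m i j (a', b)))
      = if a = a' then (n:ℂ)⁻¹ else 0 := by
  rcases eq_or_ne a a' with rfl | haa
  · rw [if_pos rfl]
    have key : ∀ b : Fin m, psiV n m i j (a, b) * star (psiV n m i j (a, b))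
        = if (a:ℕ) = ((b - i : Fin m):ℕ) then (n:ℂ)⁻¹ else 0 := by
      intro b
      rw [psiV_apply]
      by_cases ha : (a:ℕ) = ((b-i:Fin m):ℕ)
      · rw [if_pos ha, if_pos ha, phase_cancel]
      · rw [if_neg ha, if_neg ha, star_zero, zero_mul]
    rw [Finset.sum_congr rfl (fun b _ => key b)]
    have hre := Fintype.sum_equiv (Equiv.subRight i)
      (fun b : Fin m => if (a:ℕ) = ((b - i : Fin m):ℕ) then ((n:ℕ):ℂ)⁻¹ else 0)
      (fun d : Fin m => if (a:ℕ) = ((d : Fin m):ℕ) then ((n:ℕ):ℂ)⁻¹ else 0) (fun b => rfl)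
    rw [hre, sum_fin_ite_eq' m (a:ℕ) (lt_of_lt_of_le a.isLt hnm)]
  · rw [if_neg haa]
    apply Finset.sum_eq_zero
    intro b _
    rw [psiV_apply, psiV_apply]
    by_cases h1 : (a:ℕ) = ((b - i : Fin m):ℕ)
    · by_cases h2 : (a':ℕ) = ((b - i : Fin m):ℕ)
      · exact absurd (Fin.ext (h1.trans h2.symm)) haa
      · rw [if_neg h2, star_zero, mul_zero]
    · rw [if_neg h1, zero_mul]

lemma psiV_trA (n m : ℕ) [NeZero n] [NeZero m] (hnm : n ≤ m) (i : Fin m) (j : Fin n)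
    (b b' : Fin m) :
    (∑ a : Fin n, psiV n m i j (a, b) * star (psiV n m i j (a, b')))
      = if b = b' then (if ((b - i : Fin m):ℕ) < n then (n:ℂ)⁻¹ else 0) else 0 := by
  rcases eq_or_ne b b' with rfl | hbb
  · rw [if_pos rfl]
    have key : ∀ a : Fin n, psiV n m i j (a, b) * star (psiV n m i j (a, b))
        = if (a:ℕ) = ((b - i : Fin m):ℕ) then (n:ℂ)⁻¹ else 0 := by
      intro a
      rw [psiV_apply]
      by_cases ha : (a:ℕ) = ((b-i:Fin m):ℕ)
      · rw [if_pos ha, if_pos ha, phase_cancel]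
      · rw [if_neg ha, if_neg ha, star_zero, zero_mul]
    rw [Finset.sum_congr rfl (fun a _ => key a), sum_fin_ite_const]
  · rw [if_neg hbb]
    apply Finset.sum_eq_zero
    intro a _
    rw [psiV_apply, psiV_apply]
    by_cases h1 : (a:ℕ) = ((b - i : Fin m):ℕ)
    · by_cases h2 : (a:ℕ) = ((b' - i : Fin m):ℕ)
      · exfalso
        apply hbb
        have h3 : (b - i : Fin m) = b' - i := Fin.ext (h1.symm.trans h2)
        calc b = b - i + i := by ring
          _ = b' - i + i := by rw [h3]
          _ = b' := by ring
      · rw [if_neg h2, star_zero, mul_zero]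
    · rw [if_neg h1, zero_mul]

lemma count_window (n m : ℕ) [NeZero m] (hnm : n ≤ m) (b : Fin m) (x : ℂ) :
    (∑ i : Fin m, if ((b - i : Fin m):ℕ) < n then x else 0) = n * x := by
  have hre := Fintype.sum_equiv (Equiv.subLeft b)
    (fun i : Fin m => if ((b - i : Fin m):ℕ) < n then x else 0)
    (fun d : Fin m => if ((d : Fin m):ℕ) < n then x else 0) (fun i => rfl)
  rw [hre, sum_fin_ite_lt m n hnm (fun _ => x)]
  simp [Finset.sum_const, nsmul_eq_mul]

lemma sum_div_id (m k : ℕ) (hm : 0 < m) : ∑ i ∈ Finset.range m, (k + i) / m = k := by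
  set q := k / m with hq
  set s := k % m with hs'
  have hk : m * q + s = k := Nat.div_add_mod k m
  have hs : s < m := Nat.mod_lt _ hm
  have hterm : ∀ i, (k + i) / m = q + (s + i) / m := by
    intro i
    have : k + i = m * q + (s + i) := by omega
    rw [this, Nat.mul_add_div hm]
  rw [Finset.sum_congr rfl (fun i _ => hterm i), Finset.sum_add_distrib, Finset.sum_const,
    Finset.card_range, smul_eq_mul]
  have h2 : ∀ i ∈ Finset.range m, (s + i) / m = if m ≤ s + i then 1 else 0 := by
    intro i hi
    rw [Finset.mem_range] at hi
    rcases le_or_gt m (s + i) with h | h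
    · rw [if_pos h]
      exact Nat.div_eq_of_lt_le (by omega) (by omega)
    · rw [if_neg (not_le.mpr h)]
      exact Nat.div_eq_of_lt h
  rw [Finset.sum_congr rfl h2, Finset.sum_ite, Finset.sum_const, Finset.sum_const]
  have h3 : Finset.filter (fun i => m ≤ s + i) (Finset.range m) = Finset.Ico (m - s) m := by
    ext i
    simp only [Finset.mem_filter, Finset.mem_range, Finset.mem_Ico]
    omega
  rw [h3, Nat.card_Ico]
  simp only [smul_eq_mul, mul_one, mul_zero, add_zero]
  omega

noncomputable def Umat (n m : ℕ) [NeZero m] : Matrix (Fin n × Fin m) (Fin n × Fin m) ℂ :=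
  fun p q => psiV n m q.2 q.1 p

/-- for `n ≤ m` and every `m ≤ k ≤ m·n` there is a density operator on
`ℂ^n ⊗ ℂ^m` of rank `k` with margins `(1/n) I_n` and `(1/m) I_m`. -/
theorem exists_density_rank_between_m_and_mn (n m : ℕ) [NeZero n] [NeZero m]
    (hnm : n ≤ m) (k : ℕ) (hk₁ : m ≤ k) (hk₂ : k ≤ m * n) :
    ∃ ρ : Matrix (Fin n × Fin m) (Fin n × Fin m) ℂ,
      ρ.PosSemidef ∧ ρ.trace = 1 ∧ ρ.rank = k ∧
      trB ρ = ((n : ℂ))⁻¹ • (1 : Matrix (Fin n) (Fin n) ℂ) ∧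
      trA ρ = ((m : ℂ))⁻¹ • (1 : Matrix (Fin m) (Fin m) ℂ) := by
  classical
  have hm : 0 < m := Nat.pos_of_ne_zero (NeZero.ne m)
  have hn0 : (n:ℂ) ≠ 0 := Nat.cast_ne_zero.mpr (NeZero.ne n)
  have hm0 : (m:ℂ) ≠ 0 := Nat.cast_ne_zero.mpr (NeZero.ne m)
  -- the rank profile
  set r : Fin m → ℕ := fun i => (k + (i:ℕ)) / m with hrdef
  have hr1 : ∀ i, 1 ≤ r i := fun i => (Nat.one_le_div_iff hm).mpr (by omega)
  have hrn : ∀ i, r i ≤ n := by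
    intro i
    have h1 : (n+1)*m = m*n + m := by ring
    have h2 : k + (i:ℕ) < (n+1)*m := by have := i.isLt; omega
    exact Nat.lt_succ_iff.mp ((Nat.div_lt_iff_lt_mul hm).mpr h2)
  have hrsum : ∑ i : Fin m, r i = k :=
    (Fin.sum_univ_eq_sum_range (fun t => (k + t)/m) m).trans (sum_div_id m k hm)
  -- the weights
  set d : Fin n × Fin m → ℂ :=
    fun p => if (p.1:ℕ) < r p.2 then ((m * r p.2 : ℕ):ℂ)⁻¹ else 0 with hddef
  have hx_ne : ∀ i : Fin m, ((m * r i : ℕ):ℂ) ≠ 0 := fun i =>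
    Nat.cast_ne_zero.mpr (Nat.mul_ne_zero (NeZero.ne m) (by have := hr1 i; omega))
  have hd_nonneg : ∀ p, 0 ≤ d p := by
    intro p
    show (0:ℂ) ≤ if (p.1:ℕ) < r p.2 then ((m * r p.2 : ℕ):ℂ)⁻¹ else 0
    split
    · rw [show ((m * r p.2 : ℕ):ℂ) = (((m * r p.2 : ℕ):ℝ):ℂ) by push_cast; ring,
        ← Complex.ofReal_inv]
      exact Complex.zero_le_real.mpr (by positivity)
    · exact le_refl 0
  have hd_rowsum : ∀ i : Fin m, (∑ j : Fin n, d (j, i)) = (m:ℂ)⁻¹ := by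
    intro i
    calc (∑ j : Fin n, d (j, i)) = ∑ t ∈ Finset.range (r i), ((m * r i:ℕ):ℂ)⁻¹ :=
        sum_fin_ite_lt n (r i) (hrn i) (fun _ => ((m * r i:ℕ):ℂ)⁻¹)
      _ = (r i : ℂ) * ((m * r i:ℕ):ℂ)⁻¹ := by
          rw [Finset.sum_const, Finset.card_range, nsmul_eq_mul]
      _ = (m:ℂ)⁻¹ := by
          have hr0 : ((r i:ℕ):ℂ) ≠ 0 := Nat.cast_ne_zero.mpr (by have := hr1 i; omega)
          push_cast
          field_simp
  have hdsum : ∑ q : Fin n × Fin m, d q = 1 := by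
    rw [Fintype.sum_prod_type, Finset.sum_comm]
    rw [Finset.sum_congr rfl (fun i _ => hd_rowsum i), Finset.sum_const, Finset.card_univ,
      Fintype.card_fin, nsmul_eq_mul, mul_inv_cancel₀ hm0]
  -- the unitary of Weyl states
  set U := Umat n m with hUdef
  have hUU : Uᴴ * U = 1 := by
    ext q q'
    rw [Matrix.mul_apply, Matrix.one_apply]
    have : ∀ p, Uᴴ q p * U p q' = star (psiV n m q.2 q.1 p) * psiV n m q'.2 q'.1 p :=
      fun p => rfl
    rw [Finset.sum_congr rfl (fun p _ => this p), psiV_orth n m hnm q.2 q'.2 q.1 q'.1]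
    congr 1
    simp [Prod.ext_iff, and_comm, eq_iff_iff]
  have hdet2 : Uᴴ.det * U.det = 1 := by rw [← Matrix.det_mul, hUU, Matrix.det_one]
  have hdetU : IsUnit U.det := IsUnit.of_mul_eq_one _ (by rw [mul_comm]; exact hdet2)
  have hdetUH : IsUnit Uᴴ.det := IsUnit.of_mul_eq_one _ hdet2
  refine ⟨U * Matrix.diagonal d * Uᴴ, ?_, ?_, ?_, ?_, ?_⟩
  · exact (Matrix.posSemidef_diagonal_iff.mpr hd_nonneg).mul_mul_conjTranspose_same U
  · rw [Matrix.trace_mul_cycle, hUU, Matrix.one_mul, Matrix.trace_diagonal, hdsum]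
  · rw [Matrix.rank_mul_eq_left_of_isUnit_det Uᴴ (U * Matrix.diagonal d) hdetUH,
      Matrix.rank_mul_eq_right_of_isUnit_det U (Matrix.diagonal d) hdetU,
      Matrix.rank_diagonal]
    have hiff : ∀ q : Fin n × Fin m, d q ≠ 0 ↔ (q.1:ℕ) < r q.2 := by
      intro q
      show (if (q.1:ℕ) < r q.2 then ((m * r q.2 : ℕ):ℂ)⁻¹ else 0) ≠ 0 ↔ _
      by_cases h : (q.1:ℕ) < r q.2
      · simp only [h, if_true, ne_eq, iff_true]
        exact inv_ne_zero (hx_ne q.2)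
      · simp [h]
    rw [Fintype.card_subtype]
    rw [Finset.filter_congr (fun q _ => hiff q), Finset.card_filter]
    rw [Fintype.sum_prod_type, Finset.sum_comm]
    have hrow : ∀ i : Fin m, (∑ j : Fin n, if (j:ℕ) < r i then 1 else 0) = r i := by
      intro i
      rw [sum_fin_ite_lt n (r i) (hrn i) (fun _ => (1:ℕ)), Finset.sum_const,
        Finset.card_range, smul_eq_mul, mul_one]
    rw [Finset.sum_congr rfl (fun i _ => hrow i), hrsum]
  · -- trB
    have hentry : ∀ p p', (U * Matrix.diagonal d * Uᴴ) p p'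
        = ∑ q : Fin n × Fin m, d q * (psiV n m q.2 q.1 p * star (psiV n m q.2 q.1 p')) := by
      intro p p'
      rw [Matrix.mul_apply]
      apply Finset.sum_congr rfl
      intro q _
      rw [Matrix.mul_diagonal, Matrix.conjTranspose_apply]
      show U p q * d q * star (U p' q) = _
      have hU1 : U p q = psiV n m q.2 q.1 p := rfl
      have hU2 : U p' q = psiV n m q.2 q.1 p' := rfl
      rw [hU1, hU2]
      ring
    funext a a'
    show (∑ b : Fin m, (U * Matrix.diagonal d * Uᴴ) (a, b) (a', b)) = _
    rw [Finset.sum_congr rfl (fun b _ => hentry (a, b) (a', b)), Finset.sum_comm]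
    have hq : ∀ q : Fin n × Fin m,
        (∑ b : Fin m, d q * (psiV n m q.2 q.1 (a, b) * star (psiV n m q.2 q.1 (a', b))))
        = d q * (if a = a' then (n:ℂ)⁻¹ else 0) := by
      intro q
      rw [← Finset.mul_sum, psiV_trB n m hnm q.2 q.1 a a']
    rw [Finset.sum_congr rfl (fun q _ => hq q), ← Finset.sum_mul, hdsum, one_mul]
    simp [Matrix.smul_apply, Matrix.one_apply, mul_ite, mul_one, mul_zero]
  · -- trA
    have hentry : ∀ p p', (U * Matrix.diagonal d * Uᴴ) p p'
        = ∑ q : Fin n × Fin m, d q * (psiV n m q.2 q.1 p * star (psiV n m q.2 q.1 p')) := by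
      intro p p'
      rw [Matrix.mul_apply]
      apply Finset.sum_congr rfl
      intro q _
      rw [Matrix.mul_diagonal, Matrix.conjTranspose_apply]
      show U p q * d q * star (U p' q) = _
      have hU1 : U p q = psiV n m q.2 q.1 p := rfl
      have hU2 : U p' q = psiV n m q.2 q.1 p' := rfl
      rw [hU1, hU2]
      ring
    funext b b'
    show (∑ a : Fin n, (U * Matrix.diagonal d * Uᴴ) (a, b) (a, b')) = _
    rw [Finset.sum_congr rfl (fun a _ => hentry (a, b) (a, b')), Finset.sum_comm]
    have hq : ∀ q : Fin n × Fin m,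
        (∑ a : Fin n, d q * (psiV n m q.2 q.1 (a, b) * star (psiV n m q.2 q.1 (a, b'))))
        = d q * (if b = b' then (if ((b - q.2 : Fin m):ℕ) < n then (n:ℂ)⁻¹ else 0) else 0) := by
      intro q
      rw [← Finset.mul_sum, psiV_trA n m hnm q.2 q.1 b b']
    rw [Finset.sum_congr rfl (fun q _ => hq q)]
    rcases eq_or_ne b b' with rfl | hbb
    · rw [Fintype.sum_prod_type, Finset.sum_comm]
      dsimp only
      have hrow : ∀ i : Fin m,
          (∑ j : Fin n, d (j, i) * (if b = b then (if ((b - i : Fin m):ℕ) < n then (n:ℂ)⁻¹ else 0) else 0))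
          = if ((b - i : Fin m):ℕ) < n then (m:ℂ)⁻¹ * (n:ℂ)⁻¹ else 0 := by
        intro i
        have hbb2 : (if b = b then (if ((b-i:Fin m):ℕ) < n then (n:ℂ)⁻¹ else 0) else 0)
            = (if ((b-i:Fin m):ℕ) < n then (n:ℂ)⁻¹ else 0) := if_pos rfl
        rw [Finset.sum_congr rfl (fun j _ => by rw [hbb2]), ← Finset.sum_mul, hd_rowsum i]
        split
        · rfl
        · simp
      rw [Finset.sum_congr rfl (fun i _ => hrow i), count_window n m hnm b ((m:ℂ)⁻¹ * (n:ℂ)⁻¹)]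
      have : (n:ℂ) * ((m:ℂ)⁻¹ * (n:ℂ)⁻¹) = (m:ℂ)⁻¹ := by field_simp
      rw [this]
      simp [Matrix.smul_apply, Matrix.one_apply]
    · simp only [if_neg hbb, mul_zero, Finset.sum_const_zero]
      simp [Matrix.smul_apply, Matrix.one_apply, hbb]
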